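/- Let H be a graph that has a dominating system, and let 𝒟 be a dominating system of H of minimum cardinality. Then any two distinct stars in 𝒟 have distinct centers. -/

import Mathlib

/-- A subgraph `D` of `H` is a closed trail of `H` if it is the subgraph traced out by
a closed walk of `H` that repeats no edge. -/
def IsClosedTrailSubgraph {V : Type*} (H : SimpleGraph V) (D : H.Subgraph) : Prop :=
  ∃ (v : V) (w : H.Walk v v), w.IsTrail ∧ D = w.toSubgraph

/-- A subgraph `D` of `H` is a star with at least three edges with center `c` if every
vertex of `D` other than `c` is a neighbor of `c`, every edge of `D` is incident with
`c`, and `D` has at least three edges. -/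
def IsStarWithCenter {V : Type*} (H : SimpleGraph V) (D : H.Subgraph) (c : V) : Prop :=
  c ∈ D.verts ∧ (∀ v ∈ D.verts, v = c ∨ D.Adj c v) ∧
    (∀ e ∈ D.edgeSet, c ∈ e) ∧ 3 ≤ D.edgeSet.ncard

/-- A subgraph `D` of `H` is a star with at least three edges. -/
def IsBigStarSubgraph {V : Type*} (H : SimpleGraph V) (D : H.Subgraph) : Prop :=
  ∃ c : V, IsStarWithCenter H D c

/-- A dominating system of `H` is a finite set `𝒟` of pairwise edge-disjoint subgraphs
of `H`, each of which is either a closed trail or a star with at least three edges,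
such that every edge of `H` not belonging to any member of `𝒟` has at least one
endpoint lying on a closed trail in `𝒟`. -/
def IsDomSystem {V : Type*} (H : SimpleGraph V) (𝒟 : Set H.Subgraph) : Prop :=
  𝒟.Finite ∧
    (∀ D ∈ 𝒟, ∀ D' ∈ 𝒟, D ≠ D' → D.edgeSet ∩ D'.edgeSet = ∅) ∧
    (∀ D ∈ 𝒟, IsClosedTrailSubgraph H D ∨ IsBigStarSubgraph H D) ∧
    ∀ e ∈ H.edgeSet, (∀ D ∈ 𝒟, e ∉ D.edgeSet) →
      ∃ D ∈ 𝒟, IsClosedTrailSubgraph H D ∧ ∃ v, v ∈ e ∧ v ∈ D.verts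

lemma star_not_closed_trail {V : Type*} {H : SimpleGraph V} {D : H.Subgraph} {c : V}
    (hs : IsStarWithCenter H D c) : ¬ IsClosedTrailSubgraph H D := by
  classical
  rintro ⟨v, w, hw, rfl⟩
  obtain ⟨hcmem, hvs, hedge, hcard⟩ := hs
  have hne : (w.toSubgraph.edgeSet).Nonempty := by
    rw [Set.nonempty_iff_ne_empty]
    intro h
    rw [h, Set.ncard_empty] at hcard
    omega
  obtain ⟨e, he⟩ := hne
  obtain ⟨x, rfl⟩ := Sym2.mem_iff_exists.mp (hedge e he)
  have hadj : w.toSubgraph.Adj c x := SimpleGraph.Subgraph.mem_edgeSet.mp he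
  have hcx : c ≠ x := (hadj.adj_sub).ne
  have hmem : s(c, x) ∈ w.edges := (w.mem_edges_toSubgraph).mp he
  have heven : Even (List.countP (fun e => decide (x ∈ e)) w.edges) :=
    (hw.even_countP_edges_iff x).mpr (fun h => absurd rfl h)
  have hcount : List.countP (fun e => decide (x ∈ e)) w.edges
      = List.countP (fun e => e == s(c, x)) w.edges := by
    apply List.countP_congr
    intro e' he'
    have hce' : c ∈ e' := hedge e' ((w.mem_edges_toSubgraph).mpr he')
    simp only [decide_eq_true_eq, beq_iff_eq]
    constructor
    · intro hx
      exact (Sym2.mem_and_mem_iff hcx).mp ⟨hce', hx⟩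
    · rintro rfl
      simp
  rw [hcount] at heven
  have h1 : List.countP (fun e => e == s(c, x)) w.edges = 1 := by
    have := List.count_eq_one_of_mem hw.edges_nodup hmem
    simpa [List.count] using this
  rw [h1] at heven
  exact (Nat.not_even_one) heven

/-- Let `𝒟` be a dominating system of `H` of minimum cardinality.  Then any two
distinct stars in `𝒟` have distinct centers. -/
theorem min_dom_system_stars_distinct_centers
    {V : Type*} [Fintype V] (H : SimpleGraph V) (𝒟 : Set H.Subgraph)
    (hdom : IsDomSystem H 𝒟)
    (hmin : ∀ 𝒟' : Set H.Subgraph, IsDomSystem H 𝒟' → 𝒟.ncard ≤ 𝒟'.ncard) :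
    ∀ D ∈ 𝒟, ∀ D' ∈ 𝒟, D ≠ D' → ∀ c c' : V,
      IsStarWithCenter H D c → IsStarWithCenter H D' c' → c ≠ c' := by
  classical
  intro D hD D' hD' hne c c' hc hc' hcc
  subst hcc
  obtain ⟨hfin, hdisj, htype, hdomin⟩ := hdom
  set E : H.Subgraph := D ⊔ D' with hE
  set 𝒟' : Set H.Subgraph := insert E (𝒟 \ {D, D'}) with h𝒟'
  have hEedge : E.edgeSet = D.edgeSet ∪ D'.edgeSet := SimpleGraph.Subgraph.edgeSet_sup
  -- E is a star with center c
  have hEstar : IsStarWithCenter H E c := by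
    refine ⟨Or.inl hc.1, ?_, ?_, ?_⟩
    · rintro v (hv | hv)
      · rcases hc.2.1 v hv with h | h
        · exact Or.inl h
        · exact Or.inr (SimpleGraph.Subgraph.sup_adj.mpr (Or.inl h))
      · rcases hc'.2.1 v hv with h | h
        · exact Or.inl h
        · exact Or.inr (SimpleGraph.Subgraph.sup_adj.mpr (Or.inr h))
    · intro e he
      rw [hEedge] at he
      rcases he with h | h
      · exact hc.2.2.1 e h
      · exact hc'.2.2.1 e h
    · refine le_trans hc.2.2.2 ?_
      rw [hEedge]
      exact Set.ncard_le_ncard Set.subset_union_left (Set.toFinite _)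
  -- 𝒟' is a dominating system
  have hdom' : IsDomSystem H 𝒟' := by
    refine ⟨(hfin.diff).insert _, ?_, ?_, ?_⟩
    · rintro A hA B hB hAB
      rcases hA with rfl | ⟨hA𝒟, hA2⟩ <;> rcases hB with rfl | ⟨hB𝒟, hB2⟩
      · exact absurd rfl hAB
      · simp only [Set.mem_insert_iff, Set.mem_singleton_iff, not_or] at hB2
        rw [hEedge, Set.union_inter_distrib_right,
          hdisj D hD B hB𝒟 (Ne.symm hB2.1), hdisj D' hD' B hB𝒟 (Ne.symm hB2.2),
          Set.union_empty]
      · simp only [Set.mem_insert_iff, Set.mem_singleton_iff, not_or] at hA2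
        rw [hEedge, Set.inter_union_distrib_left,
          hdisj A hA𝒟 D hD hA2.1, hdisj A hA𝒟 D' hD' hA2.2, Set.union_empty]
      · exact hdisj A hA𝒟 B hB𝒟 hAB
    · rintro A (rfl | ⟨hA𝒟, _⟩)
      · exact Or.inr ⟨c, hEstar⟩
      · exact htype A hA𝒟
    · intro e he hnot
      have hnotall : ∀ F ∈ 𝒟, e ∉ F.edgeSet := by
        intro F hF
        by_cases hFD : F = D
        · subst hFD
          intro hcontra
          exact hnot E (Set.mem_insert _ _) (hEedge ▸ Or.inl hcontra)
        by_cases hFD' : F = D'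
        · subst hFD'
          intro hcontra
          exact hnot E (Set.mem_insert _ _) (hEedge ▸ Or.inr hcontra)
        · exact hnot F (Set.mem_insert_of_mem _ ⟨hF, by simp [hFD, hFD']⟩)
      obtain ⟨F, hF, hFct, v, hv, hvF⟩ := hdomin e he hnotall
      have hFD : F ≠ D := fun h => star_not_closed_trail hc (h ▸ hFct)
      have hFD' : F ≠ D' := fun h => star_not_closed_trail hc' (h ▸ hFct)
      exact ⟨F, Set.mem_insert_of_mem _ ⟨hF, by simp [hFD, hFD']⟩, hFct, v, hv, hvF⟩
  -- cardinality contradiction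
  have hsub : ({D, D'} : Set H.Subgraph) ⊆ 𝒟 := by
    rintro X (rfl | rfl)
    · exact hD
    · exact hD'
  have h2 : ({D, D'} : Set H.Subgraph).ncard = 2 := Set.ncard_pair hne
  have hdiff : (𝒟 \ {D, D'}).ncard = 𝒟.ncard - 2 := by
    rw [Set.ncard_diff hsub, h2]
  have hge2 : 2 ≤ 𝒟.ncard := h2 ▸ Set.ncard_le_ncard hsub hfin
  have hle : 𝒟'.ncard ≤ 𝒟.ncard - 1 := by
    calc 𝒟'.ncard ≤ (𝒟 \ {D, D'}).ncard + 1 := Set.ncard_insert_le _ _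
    _ = 𝒟.ncard - 2 + 1 := by rw [hdiff]
    _ = 𝒟.ncard - 1 := by omega
  have := hmin 𝒟' hdom'
  omega
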